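/- There exist an absolute constant b₀ > 0 and a function B : (0, b₀) → (0, ∞) such that the following holds for all integers p ≥ 1 and 1 ≤ m ≤ p and all b ∈ (0, b₀): with λ = b·min{(1/m)·log(ep/m), p²/m⁴}, one has E[exp(λ·H²)] ≤ B(b). In particular the expectation is bounded by a finite constant depending only on b and not on p or m. -/

import Mathlib

open Real Finset

noncomputable section

/-- The probability `P(H = i)` for `H ~ Hypergeometric(p, m, m)`. -/
def hyperPMF (p m i : ℕ) : ℝ :=
  ((m.choose i : ℝ) * ((p - m).choose (m - i) : ℝ)) / (p.choose m : ℝ)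

/-- `E[exp (t · G_i²)]` where `G_i` is the position of a symmetric (Rademacher)
random walk after `i` steps. -/
def walkSqMGF (t : ℝ) (i : ℕ) : ℝ :=
  (1 / 2 ^ i) * ∑ s : Fin i → Bool, Real.exp (t * (∑ j, (if s j then (1 : ℝ) else -1)) ^ 2)

/-- `E[exp (t · G_H²)]` where `H ~ Hypergeometric(p, m, m)` and `G` is an independent
symmetric random walk. -/
def hyperWalkMGF (p m : ℕ) (t : ℝ) : ℝ :=
  ∑ i ∈ Finset.range (m + 1), hyperPMF p m i * walkSqMGF t i

/-- `E[exp (λ · H²)]` where `H ~ Hypergeometric(p, m, m)`. -/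
def hyperSqMGF (p m : ℕ) (lam : ℝ) : ℝ :=
  ∑ i ∈ Finset.range (m + 1), hyperPMF p m i * Real.exp (lam * (i : ℝ) ^ 2)

end


/-- `i^i ≤ i! * e^i`. -/
lemma pow_self_le_factorial_mul_exp (i : ℕ) :
    (i : ℝ) ^ i ≤ (i.factorial : ℝ) * Real.exp 1 ^ i := by
  induction i with
  | zero => simp
  | succ n ih =>
    have hn : (0:ℝ) ≤ n := Nat.cast_nonneg n
    have key : ((n:ℝ) + 1) ^ n ≤ Real.exp 1 * (n:ℝ) ^ n := by
      rcases Nat.eq_zero_or_pos n with h | h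
      · subst h
        simp only [Nat.cast_zero, zero_add, pow_zero, mul_one]
        norm_num
      · have hnpos : (0:ℝ) < n := by exact_mod_cast h
        have h1 : (n:ℝ) + 1 ≤ (n:ℝ) * Real.exp ((n:ℝ)⁻¹) := by
          have := Real.add_one_le_exp ((n:ℝ)⁻¹)
          calc (n:ℝ) + 1 = (n:ℝ) * ((n:ℝ)⁻¹ + 1) := by field_simp; ring
          _ ≤ (n:ℝ) * Real.exp ((n:ℝ)⁻¹) := by
              exact mul_le_mul_of_nonneg_left this hn
        calc ((n:ℝ) + 1) ^ n ≤ ((n:ℝ) * Real.exp ((n:ℝ)⁻¹)) ^ n := by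
              apply pow_le_pow_left₀ (by positivity) h1
        _ = (n:ℝ) ^ n * Real.exp ((n:ℝ)⁻¹) ^ n := by rw [mul_pow]
        _ = (n:ℝ) ^ n * Real.exp 1 := by
              rw [← Real.exp_nat_mul]
              congr 1
              field_simp
        _ = Real.exp 1 * (n:ℝ) ^ n := by ring
    have hfac : (0:ℝ) < (n.factorial : ℝ) := by exact_mod_cast n.factorial_pos
    have hexp : (0:ℝ) < Real.exp 1 ^ n := by positivity
    calc ((n+1 : ℕ) : ℝ) ^ (n+1) = ((n:ℝ)+1) * ((n:ℝ)+1) ^ n := by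
          push_cast; ring
    _ ≤ ((n:ℝ)+1) * (Real.exp 1 * (n:ℝ) ^ n) := by
        apply mul_le_mul_of_nonneg_left key (by positivity)
    _ ≤ ((n:ℝ)+1) * (Real.exp 1 * ((n.factorial : ℝ) * Real.exp 1 ^ n)) := by
        apply mul_le_mul_of_nonneg_left _ (by positivity)
        exact mul_le_mul_of_nonneg_left ih (Real.exp_pos 1).le
    _ = (((n+1) * n.factorial : ℕ) : ℝ) * Real.exp 1 ^ (n+1) := by
        push_cast; ring
    _ = ((n+1).factorial : ℝ) * Real.exp 1 ^ (n+1) := by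
        rw [Nat.factorial_succ]

/-- `p^i · m^(i) ≤ m^i · p^(i)` (descending factorials), for `m ≤ p`. -/
lemma pow_mul_descFactorial_le (m p : ℕ) (hmp : m ≤ p) :
    ∀ i : ℕ, p ^ i * m.descFactorial i ≤ m ^ i * p.descFactorial i := by
  intro i
  induction i with
  | zero => simp
  | succ n ih =>
    rw [Nat.descFactorial_succ, Nat.descFactorial_succ]
    have h1 : (m - n) * p ≤ (p - n) * m := by
      rcases le_or_gt n m with h | h
      · have e1 : (m - n) * p = m * p - n * p := by rw [Nat.sub_mul]
        have e2 : (p - n) * m = p * m - n * m := by rw [Nat.sub_mul]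
        rw [e1, e2, Nat.mul_comm p m]
        exact Nat.sub_le_sub_left (Nat.mul_le_mul_left n hmp) _
      · rw [Nat.sub_eq_zero_of_le h.le]; simp
    calc p ^ (n+1) * ((m - n) * m.descFactorial n)
        = ((m - n) * p) * (p ^ n * m.descFactorial n) := by ring
    _ ≤ ((p - n) * m) * (m ^ n * p.descFactorial n) := Nat.mul_le_mul h1 ih
    _ = m ^ (n+1) * ((p - n) * p.descFactorial n) := by ring

/-- Tail bound numerator: `C(p-m, m-i) * p^i ≤ m^i * C(p, m)`. -/
lemma choose_tail_bound (m p i : ℕ) (hmp : m ≤ p) (him : i ≤ m) :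
    (p - m).choose (m - i) * p ^ i ≤ m ^ i * p.choose m := by
  have h1 : (p - m).choose (m - i) ≤ (p - i).choose (m - i) :=
    Nat.choose_le_choose _ (Nat.sub_le_sub_left him p)
  have h2 : (p - i).choose (m - i) * p ^ i ≤ m ^ i * p.choose m := by
    have hmi : m - i ≤ p - i := Nat.sub_le_sub_right hmp i
    have himp : i ≤ p := him.trans hmp
    -- multiply by positive K := (m-i)! * (p-m)! * d(m,i)
    have hKpos : 0 < (m - i).factorial * (p - m).factorial * m.descFactorial i :=
      Nat.mul_pos (Nat.mul_pos (Nat.factorial_pos _) (Nat.factorial_pos _))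
        (Nat.pos_of_ne_zero (by rw [Ne, Nat.descFactorial_eq_zero_iff_lt]; omega))
    refine Nat.le_of_mul_le_mul_right ?_ hKpos
    have e1 : (p - i).choose (m - i) * (m - i).factorial * (p - m).factorial
        = (p - i).factorial := by
      have := Nat.choose_mul_factorial_mul_factorial hmi
      rwa [show p - i - (m - i) = p - m by omega] at this
    have e2 : (m - i).factorial * m.descFactorial i = m.factorial := by
      have := Nat.factorial_mul_descFactorial him
      linarith [this]
    have e3 : p.choose m * m.factorial * (p - m).factorial = p.factorial :=
      Nat.choose_mul_factorial_mul_factorial hmp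
    have e4 : (p - i).factorial * p.descFactorial i = p.factorial :=
      Nat.factorial_mul_descFactorial himp
    calc (p - i).choose (m - i) * p ^ i *
          ((m - i).factorial * (p - m).factorial * m.descFactorial i)
        = ((p - i).choose (m - i) * (m - i).factorial * (p - m).factorial) *
          (p ^ i * m.descFactorial i) := by ring
    _ = (p - i).factorial * (p ^ i * m.descFactorial i) := by rw [e1]
    _ ≤ (p - i).factorial * (m ^ i * p.descFactorial i) := by
        exact Nat.mul_le_mul_left _ (pow_mul_descFactorial_le m p hmp i)
    _ = m ^ i * ((p - i).factorial * p.descFactorial i) := by ring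
    _ = m ^ i * p.factorial := by rw [e4]
    _ = m ^ i * (p.choose m * m.factorial * (p - m).factorial) := by rw [e3]
    _ = m ^ i * p.choose m * ((m - i).factorial * m.descFactorial i * (p - m).factorial) := by
        rw [e2]; ring
    _ = m ^ i * p.choose m *
          ((m - i).factorial * (p - m).factorial * m.descFactorial i) := by ring
  exact le_trans (Nat.mul_le_mul_right _ h1) h2


lemma hyperPMF_nonneg (p m i : ℕ) : 0 ≤ hyperPMF p m i := by
  unfold hyperPMF; positivity

lemma hyperPMF_sum (p m : ℕ) (hmp : m ≤ p) :
    ∑ i ∈ Finset.range (m + 1), hyperPMF p m i = 1 := by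
  have hv : ∑ i ∈ Finset.range (m + 1), m.choose i * (p - m).choose (m - i) = p.choose m := by
    have := Nat.add_choose_eq m (p - m) m
    rw [Nat.add_sub_cancel' hmp] at this
    rw [this, Finset.Nat.sum_antidiagonal_eq_sum_range_succ
      (fun a b => m.choose a * (p - m).choose b) m]
  have hpos : (0:ℝ) < (p.choose m : ℝ) := by exact_mod_cast Nat.choose_pos hmp
  unfold hyperPMF
  rw [← Finset.sum_div]
  rw [div_eq_one_iff_eq (ne_of_gt hpos)]
  exact_mod_cast hv

/-- Pointwise pmf bound `P(H=i) ≤ (e m² / (i p))^i` for `1 ≤ i ≤ m ≤ p`. -/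
lemma hyperPMF_le (p m i : ℕ) (hmp : m ≤ p) (hm : 1 ≤ m) (hi : 1 ≤ i) (him : i ≤ m) :
    hyperPMF p m i ≤ (Real.exp 1 * (m:ℝ)^2 / ((i:ℝ) * p)) ^ i := by
  have hp1 : 1 ≤ p := hm.trans hmp
  have hppos : (0:ℝ) < (p:ℝ) := by exact_mod_cast hp1
  have hipos : (0:ℝ) < (i:ℝ) := by exact_mod_cast hi
  have hmpos : (0:ℝ) < (m:ℝ) := by exact_mod_cast hm
  have hcpos : (0:ℝ) < (p.choose m : ℝ) := by exact_mod_cast Nat.choose_pos hmp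
  -- step 1 : C(p-m, m-i) ≤ m^i * C(p,m) / p^i
  have h1 : ((p - m).choose (m - i) : ℝ) ≤ (m:ℝ)^i * (p.choose m : ℝ) / (p:ℝ)^i := by
    rw [le_div_iff₀ (by positivity)]
    exact_mod_cast choose_tail_bound m p i hmp him
  -- step 2 : C(m,i) ≤ m^i * e^i / i^i
  have h2 : ((m.choose i : ℝ)) ≤ (m:ℝ)^i * Real.exp 1 ^ i / (i:ℝ)^i := by
    have hc : ((m.choose i : ℝ)) ≤ (m:ℝ)^i / (i.factorial : ℝ) := by
      have := Nat.choose_le_pow_div (α := ℝ) i m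
      simpa using this
    have hfac : (i:ℝ)^i / Real.exp 1 ^ i ≤ (i.factorial : ℝ) := by
      rw [div_le_iff₀ (by positivity)]
      exact pow_self_le_factorial_mul_exp i
    have hfpos : (0:ℝ) < (i.factorial : ℝ) := by exact_mod_cast i.factorial_pos
    calc ((m.choose i : ℝ)) ≤ (m:ℝ)^i / (i.factorial : ℝ) := hc
    _ ≤ (m:ℝ)^i / ((i:ℝ)^i / Real.exp 1 ^ i) := by
        apply div_le_div_of_nonneg_left (by positivity) (by positivity) hfac
    _ = (m:ℝ)^i * Real.exp 1 ^ i / (i:ℝ)^i := by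
        field_simp
  have hchoose_nonneg : (0:ℝ) ≤ ((m.choose i : ℝ)) := by positivity
  unfold hyperPMF
  rw [div_le_iff₀ hcpos]
  calc ((m.choose i : ℝ)) * ((p - m).choose (m - i) : ℝ)
      ≤ ((m:ℝ)^i * Real.exp 1 ^ i / (i:ℝ)^i) * ((m:ℝ)^i * (p.choose m : ℝ) / (p:ℝ)^i) := by
        apply mul_le_mul h2 h1 (by positivity) (by positivity)
  _ = (Real.exp 1 * (m:ℝ)^2 / ((i:ℝ) * p)) ^ i * (p.choose m : ℝ) := by
        rw [div_pow, mul_pow, mul_pow, ← pow_mul]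
        field_simp
        ring

/-- Core analytic inequality. -/
lemma core_ineq (s u : ℝ) (hs : 0 ≤ s) (hu : 2 ≤ u) :
    (2 + u + s) * Real.exp (-s) ≤ 2 * u := by
  have hE1 : Real.exp (-s) ≤ 1 := by
    rw [Real.exp_le_one_iff]; linarith
  have hE0 : 0 < Real.exp (-s) := Real.exp_pos _
  have hA : Real.exp (-s) * (1 + s) ≤ 1 := by
    have h := Real.add_one_le_exp s
    calc Real.exp (-s) * (1 + s) ≤ Real.exp (-s) * Real.exp s := by
          apply mul_le_mul_of_nonneg_left (by linarith) hE0.le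
    _ = 1 := by rw [← Real.exp_add]; simp
  nlinarith [mul_nonneg (by linarith : (0:ℝ) ≤ u) (by linarith : 0 ≤ 1 - Real.exp (-s))]


/-- Key analytic inequality in log form. -/
lemma key_log (i m p : ℝ) (hi : 1 ≤ i) (him : i ≤ m) (hmp : m ≤ p)
    (hc : Real.exp 1 ^ 3 * m ^ 2 ≤ i * p) :
    (1 + Real.log (p / m)) * (i / m) ≤ 2 * Real.log (i * p / (Real.exp 1 * m ^ 2)) := by
  have hm : (1:ℝ) ≤ m := hi.trans him
  have hp : (1:ℝ) ≤ p := hm.trans hmp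
  have hipos : (0:ℝ) < i := by linarith
  have hmpos : (0:ℝ) < m := by linarith
  have hppos : (0:ℝ) < p := by linarith
  set s := Real.log (m / i) with hs_def
  set u := Real.log (i * p / (Real.exp 1 * m ^ 2)) with hu_def
  have hs : 0 ≤ s := Real.log_nonneg ((one_le_div hipos).mpr him)
  have hu : 2 ≤ u := by
    rw [hu_def, Real.le_log_iff_exp_le (by positivity)]
    have h1 : Real.exp 1 ^ 3 * m ^ 2 / (Real.exp 1 * m ^ 2) ≤ i * p / (Real.exp 1 * m ^ 2) := by
      apply div_le_div_of_nonneg_right hc (by positivity)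
    have h2 : Real.exp 1 ^ 3 * m ^ 2 / (Real.exp 1 * m ^ 2) = Real.exp 2 := by
      have e2 : Real.exp 2 = Real.exp 1 ^ 2 := by
        rw [show (2:ℝ) = 1 + 1 by norm_num, Real.exp_add]; ring
      rw [e2, pow_succ, pow_two]
      have hE : Real.exp 1 ≠ 0 := (Real.exp_pos 1).ne'
      field_simp
    linarith
  have hexp : Real.exp (-s) = i / m := by
    rw [hs_def, Real.exp_neg, Real.exp_log (by positivity), inv_div]
  have hsum : 1 + Real.log (p / m) = 2 + u + s := by
    have l1 : u = Real.log i + Real.log p - (1 + 2 * Real.log m) := by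
      rw [hu_def, Real.log_div (by positivity) (by positivity),
        Real.log_mul hipos.ne' hppos.ne',
        Real.log_mul (Real.exp_pos 1).ne' (by positivity), Real.log_exp,
        Real.log_pow]
      push_cast; ring
    have l2 : s = Real.log m - Real.log i := by
      rw [hs_def, Real.log_div hmpos.ne' hipos.ne']
    have l3 : Real.log (p / m) = Real.log p - Real.log m := by
      rw [Real.log_div hppos.ne' hmpos.ne']
    rw [l1, l2, l3]; ring
  rw [hsum, ← hexp]
  exact core_ineq s u hs hu

lemma geom_half_sum (n : ℕ) : ∑ i ∈ Finset.range n, ((1:ℝ)/2) ^ i ≤ 2 := by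
  have h := geom_sum_eq (by norm_num : ((1:ℝ)/2) ≠ 1) n
  rw [h]
  have : (0:ℝ) ≤ (1/2:ℝ) ^ n := by positivity
  have h2 : ((1:ℝ)/2) ^ n ≤ 1 := pow_le_one₀ (by norm_num) (by norm_num)
  rw [div_le_iff_of_neg (by norm_num : ((1:ℝ)/2 - 1) < 0)]
  linarith


set_option maxHeartbeats 1000000 in
/-- uniform bound on the MGF of the squared hypergeometric. -/
theorem hyperSqMGF_uniform_bound :
    ∃ b₀ : ℝ, 0 < b₀ ∧
      ∃ B : ℝ → ℝ,
        (∀ b, 0 < b → b < b₀ → 0 < B b) ∧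
        ∀ (p m : ℕ), 1 ≤ m → m ≤ p →
          ∀ b : ℝ, 0 < b → b < b₀ →
            ∀ lam : ℝ,
              lam = b * min ((1 / (m : ℝ)) * Real.log (Real.exp 1 * p / m))
                  ((p : ℝ) ^ 2 / (m : ℝ) ^ 4) →
              hyperSqMGF p m lam ≤ B b := by
  classical
  refine ⟨1/4, by norm_num, fun b => Real.exp (b * Real.exp 1 ^ 6) + 1,
    fun b hb _ => by positivity, ?_⟩
  intro p m hm hmp b hb hb4 lam hlam
  have hm1 : (1:ℝ) ≤ (m:ℝ) := by exact_mod_cast hm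
  have hPM : (m:ℝ) ≤ (p:ℝ) := by exact_mod_cast hmp
  have hMpos : (0:ℝ) < (m:ℝ) := by linarith
  have hPpos : (0:ℝ) < (p:ℝ) := by linarith
  have hL : Real.log (Real.exp 1 * p / m) = 1 + Real.log ((p:ℝ) / m) := by
    rw [mul_div_assoc, Real.log_mul (Real.exp_pos 1).ne' (by positivity), Real.log_exp]
  have hlog0 : 0 ≤ Real.log ((p:ℝ) / m) :=
    Real.log_nonneg ((one_le_div hMpos).mpr hPM)
  have hlam1 : lam ≤ b * ((1 + Real.log ((p:ℝ)/m)) / m) := by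
    rw [hlam]
    apply mul_le_mul_of_nonneg_left _ hb.le
    calc min ((1 / (m : ℝ)) * Real.log (Real.exp 1 * p / m)) ((p : ℝ) ^ 2 / (m : ℝ) ^ 4)
        ≤ (1 / (m : ℝ)) * Real.log (Real.exp 1 * p / m) := min_le_left _ _
    _ = (1 + Real.log ((p:ℝ)/m)) / m := by rw [hL]; ring
  have hlam2 : lam ≤ b * ((p:ℝ)^2 / (m:ℝ)^4) := by
    rw [hlam]
    exact mul_le_mul_of_nonneg_left (min_le_right _ _) hb.le
  -- split the sum
  set pred : ℕ → Prop := fun i => (i:ℝ) * p ≤ Real.exp 1 ^ 3 * (m:ℝ) ^ 2 with hpred_def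
  rw [hyperSqMGF, ← Finset.sum_filter_add_sum_filter_not (Finset.range (m+1)) pred]
  have bound1 : ∑ i ∈ (Finset.range (m+1)).filter pred,
      hyperPMF p m i * Real.exp (lam * (i:ℝ)^2) ≤ Real.exp (b * Real.exp 1 ^ 6) := by
    calc ∑ i ∈ (Finset.range (m+1)).filter pred,
        hyperPMF p m i * Real.exp (lam * (i:ℝ)^2)
        ≤ ∑ i ∈ (Finset.range (m+1)).filter pred,
          hyperPMF p m i * Real.exp (b * Real.exp 1 ^ 6) := by
          apply Finset.sum_le_sum
          intro i hi
          have hip : (i:ℝ) * p ≤ Real.exp 1 ^ 3 * (m:ℝ) ^ 2 := (Finset.mem_filter.mp hi).2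
          apply mul_le_mul_of_nonneg_left _ (hyperPMF_nonneg p m i)
          apply Real.exp_le_exp.mpr
          have h1 : lam * (i:ℝ)^2 ≤ b * ((p:ℝ)^2 / (m:ℝ)^4) * (i:ℝ)^2 :=
            mul_le_mul_of_nonneg_right hlam2 (sq_nonneg _)
          have h2 : ((i:ℝ) * p)^2 ≤ (Real.exp 1 ^ 3 * (m:ℝ)^2)^2 := by
            rw [pow_two, pow_two]
            exact mul_self_le_mul_self (by positivity) hip
          have h3 : b * ((p:ℝ)^2 / (m:ℝ)^4) * (i:ℝ)^2 ≤ b * Real.exp 1 ^ 6 := by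
            have e1 : b * ((p:ℝ)^2 / (m:ℝ)^4) * (i:ℝ)^2 = b * (((i:ℝ)*p)^2 / (m:ℝ)^4) := by
              ring
            have e2 : (Real.exp 1 ^ 3 * (m:ℝ)^2)^2 / (m:ℝ)^4 = Real.exp 1 ^ 6 := by
              field_simp
            rw [e1, ← e2]
            apply mul_le_mul_of_nonneg_left _ hb.le
            exact div_le_div_of_nonneg_right h2 (by positivity)
          linarith
    _ = Real.exp (b * Real.exp 1 ^ 6) *
          ∑ i ∈ (Finset.range (m+1)).filter pred, hyperPMF p m i := by
          rw [Finset.mul_sum]; apply Finset.sum_congr rfl; intro i _; ring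
    _ ≤ Real.exp (b * Real.exp 1 ^ 6) * 1 := by
          apply mul_le_mul_of_nonneg_left _ (Real.exp_pos _).le
          calc ∑ i ∈ (Finset.range (m+1)).filter pred, hyperPMF p m i
              ≤ ∑ i ∈ Finset.range (m+1), hyperPMF p m i :=
                Finset.sum_le_sum_of_subset_of_nonneg (Finset.filter_subset _ _)
                  (fun i _ _ => hyperPMF_nonneg p m i)
          _ = 1 := hyperPMF_sum p m hmp
    _ = Real.exp (b * Real.exp 1 ^ 6) := mul_one _
  have bound2 : ∑ i ∈ (Finset.range (m+1)).filter (fun i => ¬ pred i),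
      hyperPMF p m i * Real.exp (lam * (i:ℝ)^2) ≤ 1 := by
    have hterm : ∀ i ∈ (Finset.range (m+1)).filter (fun i => ¬ pred i),
        hyperPMF p m i * Real.exp (lam * (i:ℝ)^2) ≤ ((1:ℝ)/2)^i := by
      intro i hi
      obtain ⟨hir, hnp⟩ := Finset.mem_filter.mp hi
      have him : i ≤ m := Nat.lt_succ_iff.mp (Finset.mem_range.mp hir)
      have hip : Real.exp 1 ^ 3 * (m:ℝ)^2 < (i:ℝ) * p := by
        simpa [hpred_def] using not_le.mp hnp
      have hi1 : 1 ≤ i := by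
        rcases Nat.eq_zero_or_pos i with h0 | h
        · exfalso
          subst h0
          have hz : ((0:ℕ):ℝ) * (p:ℝ) = 0 := by simp
          rw [hz] at hip
          have hnn : (0:ℝ) ≤ Real.exp 1 ^ 3 * (m:ℝ)^2 := by positivity
          linarith
        · exact h
      have hi1' : (1:ℝ) ≤ (i:ℝ) := by exact_mod_cast hi1
      have hiM : (i:ℝ) ≤ (m:ℝ) := by exact_mod_cast him
      set u := Real.log ((i:ℝ) * p / (Real.exp 1 * (m:ℝ)^2)) with hu_def
      have hxpos : (0:ℝ) < (i:ℝ) * p / (Real.exp 1 * (m:ℝ)^2) := by positivity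
      have hu2 : 2 ≤ u := by
        rw [hu_def, Real.le_log_iff_exp_le hxpos]
        have e2 : Real.exp 2 = Real.exp 1 ^ 2 := by
          rw [show (2:ℝ) = 1 + 1 by norm_num, Real.exp_add]; ring
        have h1 : Real.exp 1 ^ 3 * (m:ℝ)^2 / (Real.exp 1 * (m:ℝ)^2)
            ≤ (i:ℝ) * p / (Real.exp 1 * (m:ℝ)^2) :=
          div_le_div_of_nonneg_right hip.le (by positivity)
        have h2 : Real.exp 1 ^ 3 * (m:ℝ)^2 / (Real.exp 1 * (m:ℝ)^2) = Real.exp 1 ^ 2 := by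
          have hE : Real.exp 1 ≠ 0 := (Real.exp_pos 1).ne'
          field_simp
        rw [e2]
        linarith
      -- pmf bound in exp form
      have hpmf : hyperPMF p m i ≤ Real.exp (-((i:ℝ) * u)) := by
        have hb1 := hyperPMF_le p m i hmp hm hi1 him
        have hx : Real.exp 1 * (m:ℝ)^2 / ((i:ℝ) * p) = Real.exp (-u) := by
          rw [hu_def, Real.exp_neg, Real.exp_log hxpos, inv_div]
        calc hyperPMF p m i ≤ (Real.exp 1 * (m:ℝ)^2 / ((i:ℝ) * p)) ^ i := hb1
        _ = Real.exp (-u) ^ i := by rw [hx]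
        _ = Real.exp (-((i:ℝ) * u)) := by
            rw [← Real.exp_nat_mul]; congr 1; ring
      -- exponent bound
      have hkey := key_log (i:ℝ) (m:ℝ) (p:ℝ) hi1' hiM hPM hip.le
      have hexp_bd : lam * (i:ℝ)^2 ≤ (i:ℝ) * u / 2 := by
        have h1 : lam * (i:ℝ)^2 ≤ b * ((1 + Real.log ((p:ℝ)/m)) / m) * (i:ℝ)^2 :=
          mul_le_mul_of_nonneg_right hlam1 (sq_nonneg _)
        have h2 : b * ((1 + Real.log ((p:ℝ)/m)) / m) * (i:ℝ)^2
            = (b * (i:ℝ)) * ((1 + Real.log ((p:ℝ)/m)) * ((i:ℝ)/m)) := by ring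
        have h3 : (b * (i:ℝ)) * ((1 + Real.log ((p:ℝ)/m)) * ((i:ℝ)/m))
            ≤ (b * (i:ℝ)) * (2 * u) :=
          mul_le_mul_of_nonneg_left hkey (by positivity)
        have h4 : (b * (i:ℝ)) * (2 * u) ≤ (1/4 * (i:ℝ)) * (2 * u) := by
          apply mul_le_mul_of_nonneg_right _ (by nlinarith)
          nlinarith
        have h5 : (1/4 * (i:ℝ)) * (2 * u) = (i:ℝ) * u / 2 := by ring
        linarith
      calc hyperPMF p m i * Real.exp (lam * (i:ℝ)^2)
          ≤ Real.exp (-((i:ℝ) * u)) * Real.exp ((i:ℝ) * u / 2) := by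
            apply mul_le_mul hpmf (Real.exp_le_exp.mpr hexp_bd)
              (Real.exp_pos _).le (Real.exp_pos _).le
      _ = Real.exp (-((i:ℝ) * u) / 2) := by
            rw [← Real.exp_add]; congr 1; ring
      _ ≤ Real.exp (-(i:ℝ)) := by
            apply Real.exp_le_exp.mpr
            nlinarith
      _ = Real.exp (-1) ^ i := by
            rw [← Real.exp_nat_mul]; congr 1; ring
      _ ≤ ((1:ℝ)/2)^i := by
            apply pow_le_pow_left₀ (Real.exp_pos _).le
            rw [Real.exp_neg]
            have h2 : (2:ℝ) ≤ Real.exp 1 := by nlinarith [Real.add_one_le_exp 1]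
            rw [show (1:ℝ)/2 = 2⁻¹ by norm_num]
            exact inv_anti₀ (by norm_num) h2
    calc ∑ i ∈ (Finset.range (m+1)).filter (fun i => ¬ pred i),
        hyperPMF p m i * Real.exp (lam * (i:ℝ)^2)
        ≤ ∑ i ∈ (Finset.range (m+1)).filter (fun i => ¬ pred i), ((1:ℝ)/2)^i :=
          Finset.sum_le_sum hterm
    _ ≤ ∑ i ∈ (Finset.range (m+1)).erase 0, ((1:ℝ)/2)^i := by
          apply Finset.sum_le_sum_of_subset_of_nonneg
          · intro i hi
            obtain ⟨hir, hnp⟩ := Finset.mem_filter.mp hi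
            rw [Finset.mem_erase]
            refine ⟨?_, hir⟩
            intro h0
            subst h0
            apply hnp
            simp [hpred_def]
            positivity
          · intro i _ _; positivity
    _ ≤ 1 := by
          have h := Finset.add_sum_erase (Finset.range (m+1)) (fun i => ((1:ℝ)/2)^i)
            (Finset.mem_range.mpr (Nat.succ_pos m))
          have h2 := geom_half_sum (m+1)
          simp only [pow_zero] at h
          linarith
  exact add_le_add bound1 bound2
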